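/- Let q, n ≥ 1 and define f : {x,y}* → ZMod q as follows: for a word w over the two-letter alphabet {x, y}, if w contains at most n occurrences of x then f(w) is the number of y's in w modulo q; otherwise, let w' be the suffix of w strictly after the (n+1)-st occurrence of x counted from the right, and f(w) is the number of y's in w' modulo q. Define g : (Fin q)^n → {x,y}* by g(i₁,…,iₙ) = x y^{i₁} x y^{i₂} ⋯ x y^{iₙ}. Then for any κ₁ ≠ κ₂ in (Fin q)^n there exists a word w ∈ {x,y}* such that f(g(κ₁) ++ w) = 0 and f(g(κ₂) ++ w) ≠ 0. -/
import Mathlib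


/-- The two-letter alphabet `{x, y}`. -/
inductive XY : Type
  | x : XY
  | y : XY
deriving DecidableEq

/-- The longest suffix of `w` containing at most `n` occurrences of `x`
(equivalently, the part of `w` strictly after the `(n+1)`-st occurrence of `x`
from the right, or `w` itself if `w` has at most `n` occurrences of `x`). -/
def goodSuffix (n : ℕ) : List XY → List XY
  | [] => []
  | a :: w => if (a :: w).count XY.x ≤ n then a :: w else goodSuffix n w

/-- `f w` is the number of `y`'s in `w` after the `(n+1)`-st occurrence of `x`
from the right (all `y`'s if there are at most `n` occurrences of `x`), mod `q`. -/
def f (q n : ℕ) (w : List XY) : ZMod q := ((goodSuffix n w).count XY.y : ZMod q)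

/-- `g (i₁, …, iₙ) = x y^{i₁} x y^{i₂} ⋯ x y^{iₙ}`. -/
def g (q n : ℕ) (κ : Fin n → Fin q) : List XY :=
  (List.ofFn fun j : Fin n => XY.x :: List.replicate (κ j : ℕ) XY.y).flatten

lemma goodSuffix_of_le {n : ℕ} {w : List XY} (h : w.count XY.x ≤ n) : goodSuffix n w = w := by
  cases w with
  | nil => rfl
  | cons a w => simp [goodSuffix, h]

lemma goodSuffix_append {n : ℕ} (u : List XY) {s : List XY} (h : n < s.count XY.x) :
    goodSuffix n (u ++ s) = goodSuffix n s := by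
  induction u with
  | nil => simp
  | cons a u ih =>
    have h2 : ¬ ((a :: (u ++ s)).count XY.x ≤ n) := by
      simp only [List.count_cons, List.count_append]
      omega
    simpa [goodSuffix, h2] using ih

lemma goodSuffix_key {n : ℕ} (u : List XY) {s : List XY} (h : s.count XY.x = n) :
    goodSuffix n (u ++ XY.x :: s) = s := by
  have h1 : n < (XY.x :: s).count XY.x := by simp [List.count_cons]; omega
  rw [goodSuffix_append u h1]
  have h2 : ¬ ((XY.x :: s).count XY.x ≤ n) := by simp [List.count_cons]; omega
  simp only [goodSuffix]
  rw [if_neg h2]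
  exact goodSuffix_of_le (le_of_eq h)

lemma count_flatten_ofFn (m : ℕ) (a : XY) (F : Fin m → List XY) :
    ((List.ofFn F).flatten.count a) = ∑ i : Fin m, (F i).count a := by
  rw [List.count_flatten, List.map_ofFn, List.sum_ofFn]
  rfl

lemma fval (q n j m c : ℕ) (h : n = j + 1 + m) (κ : Fin n → Fin q) :
    f q n (g q n κ ++ (List.replicate (j + 1) XY.x ++ List.replicate c XY.y))
      = (((κ ⟨j, by omega⟩ : ℕ)
          + (∑ i : Fin m, (κ ⟨j + 1 + (i : ℕ), by omega⟩ : ℕ)) + c : ℕ) : ZMod q) := by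
  subst h
  set s : List XY :=
    List.replicate (κ ⟨j, by omega⟩ : ℕ) XY.y
      ++ ((List.ofFn fun i : Fin m => XY.x :: List.replicate ((κ ⟨j + 1 + (i : ℕ), by omega⟩ : ℕ)) XY.y).flatten
      ++ (List.replicate (j + 1) XY.x ++ List.replicate c XY.y)) with hs
  have hdecomp : g q (j + 1 + m) κ ++ (List.replicate (j + 1) XY.x ++ List.replicate c XY.y)
      = (List.ofFn fun i : Fin j =>
          XY.x :: List.replicate ((κ ⟨(i : ℕ), by omega⟩ : ℕ)) XY.y).flatten ++ (XY.x :: s) := by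
    rw [g, List.ofFn_add, List.ofFn_succ']
    simp only [List.concat_eq_append, List.flatten_append, List.flatten_cons, List.flatten_nil, List.append_nil, hs]
    simp only [List.append_assoc, List.cons_append]
    rfl
  have hsx : s.count XY.x = j + 1 + m := by
    simp [hs, List.count_append, List.count_replicate, count_flatten_ofFn, List.count_cons]
    omega
  rw [f, hdecomp, goodSuffix_key _ hsx]
  have hsy : s.count XY.y = (κ ⟨j, by omega⟩ : ℕ)
      + (∑ i : Fin m, (κ ⟨j + 1 + (i : ℕ), by omega⟩ : ℕ)) + c := by
    simp [hs, List.count_append, List.count_replicate, count_flatten_ofFn, List.count_cons]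
    ring
  rw [hsy]

/-- For distinct `κ₁, κ₂ ∈ (Fin q)ⁿ` there is a word `w` with
`f (g κ₁ ++ w) = 0` and `f (g κ₂ ++ w) ≠ 0`. -/
theorem separating_word (q n : ℕ) (hq : 1 ≤ q) (hn : 1 ≤ n)
    (κ₁ κ₂ : Fin n → Fin q) (hκ : κ₁ ≠ κ₂) :
    ∃ w : List XY, f q n (g q n κ₁ ++ w) = 0 ∧ f q n (g q n κ₂ ++ w) ≠ 0 := by
  haveI : NeZero q := ⟨by omega⟩
  obtain ⟨j, hdiff, hgt⟩ :
      ∃ j : Fin n, κ₁ j ≠ κ₂ j ∧ ∀ i : Fin n, (j : ℕ) < (i : ℕ) → κ₁ i = κ₂ i := by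
    have hne : (Finset.univ.filter fun i : Fin n => κ₁ i ≠ κ₂ i).Nonempty := by
      by_contra h
      apply hκ
      funext i
      by_contra hc
      exact h ⟨i, by simp [hc]⟩
    set S := Finset.univ.filter fun i : Fin n => κ₁ i ≠ κ₂ i with hS
    refine ⟨S.max' hne, ?_, ?_⟩
    · exact (Finset.mem_filter.mp (S.max'_mem hne)).2
    · intro i hi
      by_contra hc
      have hiS : i ∈ S := by rw [hS, Finset.mem_filter]; exact ⟨Finset.mem_univ _, hc⟩
      have := S.le_max' i hiS
      exact absurd hi (by omega)
  set m : ℕ := n - (j : ℕ) - 1 with hm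
  have hmn : n = (j : ℕ) + 1 + m := by have := j.isLt; omega
  have key : ∀ t : ℕ, t + (q - 1) * t = t * q := by
    intro t
    have h1 : t ≤ q * t := Nat.le_mul_of_pos_left t (by omega)
    rw [Nat.sub_one_mul, mul_comm t q]
    omega
  set Sm : ℕ := ∑ i : Fin m, (κ₁ ⟨(j : ℕ) + 1 + (i : ℕ), by omega⟩ : ℕ) with hSm
  set c : ℕ := (q - 1) * ((κ₁ j : ℕ) + Sm) with hc
  have hj' : (⟨(j : ℕ), by omega⟩ : Fin n) = j := by ext; rfl
  have h1 : (((κ₁ j : ℕ) + Sm + c : ℕ) : ZMod q) = 0 := by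
    have heq : (κ₁ j : ℕ) + Sm + c = ((κ₁ j : ℕ) + Sm) * q := by
      rw [hc]
      have := key ((κ₁ j : ℕ) + Sm)
      omega
    rw [heq]
    push_cast [ZMod.natCast_self]
    ring
  refine ⟨List.replicate ((j : ℕ) + 1) XY.x ++ List.replicate c XY.y, ?_, ?_⟩
  · rw [fval q n (j : ℕ) m c hmn κ₁, hj']
    exact h1
  · rw [fval q n (j : ℕ) m c hmn κ₂, hj']
    have hSeq : (∑ i : Fin m, (κ₂ ⟨(j : ℕ) + 1 + (i : ℕ), by omega⟩ : ℕ)) = Sm := by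
      rw [hSm]
      refine Finset.sum_congr rfl fun i _ => ?_
      exact congrArg Fin.val
        (hgt ⟨(j : ℕ) + 1 + (i : ℕ), by omega⟩
          (show (j : ℕ) < (j : ℕ) + 1 + (i : ℕ) by omega)).symm
    rw [hSeq]
    intro h0
    have h2 : ((κ₂ j : ℕ) : ZMod q) = ((κ₁ j : ℕ) : ZMod q) := by
      push_cast at h0 h1 ⊢
      linear_combination h0 - h1
    have h3 : (κ₂ j : ℕ) = (κ₁ j : ℕ) := by
      have := congrArg ZMod.val h2
      rwa [ZMod.val_cast_of_lt (κ₂ j).isLt, ZMod.val_cast_of_lt (κ₁ j).isLt] at this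
    exact hdiff (Fin.val_injective h3).symm
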